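/- Let r ≥ 4 be even and A a primitive 4r-th root of unity, [n] = (A^{2n}−A^{−2n})/(A²−A^{−2}). Then for every integer m with 1 ≤ m ≤ r−1: ∑_{n odd, 1 ≤ n ≤ r−1} [n]·[nm] = (−r/(A²−A^{−2})²) · (δ_{m,1} + δ_{m,r−1}); i.e., the sum vanishes unless m = 1 or m = r−1, in which cases it equals −r/(A²−A^{−2})². -/

import Mathlib

noncomputable def qint (A : ℂ) (n : ℕ) : ℂ :=
  (A ^ (2 * n) - A⁻¹ ^ (2 * n)) / (A ^ 2 - A⁻¹ ^ 2)

lemma qint_eq (A : ℂ) (n : ℕ) :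
    qint A n = ((A ^ 2) ^ n - ((A ^ 2) ^ n)⁻¹) / (A ^ 2 - A⁻¹ ^ 2) := by
  unfold qint
  rw [pow_mul A, pow_mul A⁻¹, inv_pow, inv_pow]

lemma tele (y : ℂ) (hy : y ≠ 0) (s : ℕ) :
    (y ^ 2 - 1) * ∑ j ∈ Finset.range s, (y ^ (2 * j + 1) + (y⁻¹) ^ (2 * j + 1)) =
      y * (y ^ (2 * s) - (y⁻¹) ^ (2 * s)) := by
  induction s with
  | zero => simp
  | succ n ih =>
    rw [Finset.sum_range_succ, mul_add, ih]
    have h1 : y ^ (2 * (n + 1)) = y ^ (2 * n) * y ^ 2 := by ring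
    have h2 : (y⁻¹) ^ (2 * (n + 1)) = (y⁻¹) ^ (2 * n) * (y⁻¹) ^ 2 := by ring
    have h3 : y ^ (2 * n + 1) = y ^ (2 * n) * y := by ring
    have h4 : (y⁻¹) ^ (2 * n + 1) = (y⁻¹) ^ (2 * n) * y⁻¹ := by ring
    rw [h1, h2, h3, h4]
    field_simp
    ring

lemma Tsum0 (q : ℂ) (hq : q ≠ 0) (s k : ℕ) (hqr : q ^ (2 * s) = -1)
    (hne : q ^ (2 * k) ≠ 1) :
    ∑ j ∈ Finset.range s, ((q ^ k) ^ (2 * j + 1) + ((q ^ k)⁻¹) ^ (2 * j + 1)) = 0 := by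
  have hy : (q ^ k : ℂ) ≠ 0 := pow_ne_zero _ hq
  have h2 : (q ^ k) ^ (2 * s) = (-1 : ℂ) ^ k := by
    rw [← pow_mul, mul_comm k (2 * s), pow_mul, hqr]
  have h3 : ((q ^ k)⁻¹) ^ (2 * s) = (-1 : ℂ) ^ k := by
    rw [inv_pow, h2, ← inv_pow, inv_neg, inv_one]
  have h4 := tele (q ^ k) hy s
  rw [h2, h3, sub_self, mul_zero] at h4
  have h5 : (q ^ k) ^ 2 - 1 ≠ 0 := by
    rw [← pow_mul, mul_comm k 2, sub_ne_zero]
    exact hne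
  rcases mul_eq_zero.mp h4 with h | h
  · exact absurd h h5
  · exact h

lemma Tneg1 (s : ℕ) :
    ∑ j ∈ Finset.range s, ((-1 : ℂ) ^ (2 * j + 1) + ((-1 : ℂ)⁻¹) ^ (2 * j + 1))
      = -(2 * s) := by
  have h : ∀ j : ℕ, ((-1 : ℂ)) ^ (2 * j + 1) = -1 := by
    intro j
    rw [pow_succ, pow_mul]
    simp
  calc ∑ j ∈ Finset.range s, ((-1 : ℂ) ^ (2 * j + 1) + ((-1 : ℂ)⁻¹) ^ (2 * j + 1))
      = ∑ _j ∈ Finset.range s, (-2 : ℂ) := by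
        apply Finset.sum_congr rfl
        intro j _
        rw [inv_neg, inv_one, h j]
        ring
    _ = -(2 * s) := by
        rw [Finset.sum_const, Finset.card_range]
        ring

lemma key_id (u : ℂ) (hu : u ≠ 0) (m' : ℕ) :
    (u - u⁻¹) * (u ^ (m' + 1) - (u ^ (m' + 1))⁻¹) =
      u ^ (m' + 2) + (u ^ (m' + 2))⁻¹ - (u ^ m' + (u ^ m')⁻¹) := by
  have p1 : u ^ (m' + 1) = u ^ m' * u := by ring
  have p2 : u ^ (m' + 2) = u ^ m' * u ^ 2 := by ring
  rw [p1, p2]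
  have hv : u ^ m' ≠ 0 := pow_ne_zero _ hu
  field_simp
  ring

theorem stmt_6 (r : ℕ) (hr : 4 ≤ r) (hre : Even r) (A : ℂ)
    (hA : IsPrimitiveRoot A (4 * r)) (m : ℕ) (hm1 : 1 ≤ m) (hm2 : m ≤ r - 1) :
    ∑ n ∈ (Finset.Icc 1 (r - 1)).filter (fun n => Odd n), qint A n * qint A (n * m) =
      (-(r : ℂ) / (A ^ 2 - A⁻¹ ^ 2) ^ 2) *
        ((if m = 1 then (1 : ℂ) else 0) + (if m = r - 1 then (1 : ℂ) else 0)) := by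
  obtain ⟨s, hs0⟩ := hre
  have hs2 : r = 2 * s := by omega
  have hA0 : A ≠ 0 := hA.ne_zero (by omega)
  have hq0 : (A ^ 2 : ℂ) ≠ 0 := pow_ne_zero _ hA0
  -- (A^2) ^ r = -1
  have hqr : (A ^ 2) ^ r = -1 := by
    have h1 : A ^ (2 * r) ≠ 1 := hA.pow_ne_one_of_pos_of_lt (by omega) (by omega)
    have hprod : A ^ (2 * r) * A ^ (2 * r) = 1 := by
      rw [← pow_add]
      have h4r : 2 * r + 2 * r = 4 * r := by ring
      rw [h4r, hA.pow_eq_one]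
    have h2 : (A ^ (2 * r) - 1) * (A ^ (2 * r) + 1) = 0 := by
      linear_combination hprod
    have h3 : (A ^ 2) ^ r = A ^ (2 * r) := (pow_mul A 2 r).symm
    rcases mul_eq_zero.mp h2 with h | h
    · exact absurd (by linear_combination h) h1
    · rw [h3]; linear_combination h
  have hq2s : (A ^ 2) ^ (2 * s) = -1 := by rw [← hs2]; exact hqr
  -- for 0 < k < r, (A^2) ^ (2k) ≠ 1
  have hne : ∀ k : ℕ, 0 < k → k < r → (A ^ 2) ^ (2 * k) ≠ 1 := by
    intro k hk1 hk2
    have he : (A ^ 2) ^ (2 * k) = A ^ (4 * k) := by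
      rw [← pow_mul]
      ring_nf
    rw [he]
    exact hA.pow_ne_one_of_pos_of_lt (by omega) (by omega)
  -- denominator nonzero
  have hd : A ^ 2 - A⁻¹ ^ 2 ≠ 0 := by
    have h4 : A ^ 4 ≠ 1 := hA.pow_ne_one_of_pos_of_lt (by omega) (by omega)
    intro h
    apply h4
    rw [inv_pow, sub_eq_zero] at h
    have h2 : A ^ 2 * A ^ 2 = 1 := by
      nth_rewrite 2 [h]
      exact mul_inv_cancel₀ hq0
    linear_combination h2
  -- reindex
  have hset : (Finset.Icc 1 (r - 1)).filter (fun n => Odd n)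
      = (Finset.range s).image (fun j => 2 * j + 1) := by
    ext n
    simp only [Finset.mem_filter, Finset.mem_Icc, Finset.mem_image, Finset.mem_range,
      Nat.odd_iff]
    constructor
    · rintro ⟨⟨h1, h2⟩, h3⟩
      exact ⟨n / 2, by omega, by omega⟩
    · rintro ⟨j, hj, rfl⟩
      omega
  rw [hset, Finset.sum_image (by intro a _ b _ hab; simp only at hab; omega)]
  obtain ⟨m', rfl⟩ : ∃ m', m = m' + 1 := ⟨m - 1, by omega⟩
  -- per-term identity
  have hterm : ∀ j ∈ Finset.range s,
      qint A (2 * j + 1) * qint A ((2 * j + 1) * (m' + 1)) =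
      ((((A ^ 2) ^ (m' + 2)) ^ (2 * j + 1) + (((A ^ 2) ^ (m' + 2))⁻¹) ^ (2 * j + 1))
        - (((A ^ 2) ^ m') ^ (2 * j + 1) + (((A ^ 2) ^ m')⁻¹) ^ (2 * j + 1)))
        / (A ^ 2 - A⁻¹ ^ 2) ^ 2 := by
    intro j _
    have hu0 : ((A ^ 2) ^ (2 * j + 1) : ℂ) ≠ 0 := pow_ne_zero _ hq0
    rw [qint_eq, qint_eq, div_mul_div_comm, ← sq]
    congr 1
    simp only [inv_pow]
    rw [pow_mul (A ^ 2) (2 * j + 1) (m' + 1),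
      pow_right_comm (A ^ 2) (m' + 2) (2 * j + 1),
      pow_right_comm (A ^ 2) m' (2 * j + 1)]
    exact key_id _ hu0 m'
  rw [Finset.sum_congr rfl hterm, ← Finset.sum_div, Finset.sum_sub_distrib]
  -- case analysis
  by_cases hc1 : m' = 0
  · subst hc1
    have T2 : ∑ j ∈ Finset.range s,
        (((A ^ 2) ^ (0 + 2)) ^ (2 * j + 1) + (((A ^ 2) ^ (0 + 2))⁻¹) ^ (2 * j + 1)) = 0 :=
      Tsum0 (A ^ 2) hq0 s 2 hq2s (hne 2 (by omega) (by omega))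
    have T0 : ∑ j ∈ Finset.range s,
        (((A ^ 2) ^ 0) ^ (2 * j + 1) + (((A ^ 2) ^ 0)⁻¹) ^ (2 * j + 1)) = (2 * s : ℂ) := by
      simp only [pow_zero, one_pow, inv_one]
      rw [Finset.sum_const, Finset.card_range]
      ring
    rw [T2, T0]
    have hcast : ((r : ℂ)) = 2 * s := by rw [hs2]; push_cast; ring
    have hif1 : (0 : ℕ) + 1 = 1 := rfl
    have hif2 : (0 : ℕ) + 1 ≠ r - 1 := by omega
    rw [if_pos hif1, if_neg hif2, hcast]
    ring
  · by_cases hc2 : m' = r - 2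
    · subst hc2
      have e1 : r - 2 + 2 = r := by omega
      have Tr : ∑ j ∈ Finset.range s,
          (((A ^ 2) ^ (r - 2 + 2)) ^ (2 * j + 1) + (((A ^ 2) ^ (r - 2 + 2))⁻¹) ^ (2 * j + 1))
            = -(2 * s : ℂ) := by
        rw [e1, hqr]
        exact Tneg1 s
      have Tr2 : ∑ j ∈ Finset.range s,
          (((A ^ 2) ^ (r - 2)) ^ (2 * j + 1) + (((A ^ 2) ^ (r - 2))⁻¹) ^ (2 * j + 1)) = 0 :=
        Tsum0 (A ^ 2) hq0 s (r - 2) hq2s (hne (r - 2) (by omega) (by omega))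
      rw [Tr, Tr2]
      have hcast : ((r : ℂ)) = 2 * s := by rw [hs2]; push_cast; ring
      have hif1 : r - 2 + 1 ≠ 1 := by omega
      have hif2 : r - 2 + 1 = r - 1 := by omega
      rw [if_neg hif1, if_pos hif2, hcast]
      ring
    · have Ta : ∑ j ∈ Finset.range s,
          (((A ^ 2) ^ (m' + 2)) ^ (2 * j + 1) + (((A ^ 2) ^ (m' + 2))⁻¹) ^ (2 * j + 1)) = 0 :=
        Tsum0 (A ^ 2) hq0 s (m' + 2) hq2s (hne (m' + 2) (by omega) (by omega))
      have Tb : ∑ j ∈ Finset.range s,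
          (((A ^ 2) ^ m') ^ (2 * j + 1) + (((A ^ 2) ^ m')⁻¹) ^ (2 * j + 1)) = 0 :=
        Tsum0 (A ^ 2) hq0 s m' hq2s (hne m' (by omega) (by omega))
      rw [Ta, Tb]
      have hif1 : m' + 1 ≠ 1 := by omega
      have hif2 : m' + 1 ≠ r - 1 := by omega
      rw [if_neg hif1, if_neg hif2]
      ring
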